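/- Let p be an odd prime and I a type. The subgroup of Equiv.Perm (I × {a : ZMod p // a ≠ 0}) consisting of all permutations commuting with every permutation (i, a) ↦ (i, u·a) for u ∈ (ZMod p)ˣ is isomorphic, as a group, to the semidirect product (I → ZMod (p − 1)) ⋊ Equiv.Perm I, where Equiv.Perm I acts on the product group I → ZMod (p − 1) by permuting coordinates; that is, it is the unrestricted wreath product ℤ_{p−1} ≀ S_I. -/

import Mathlib

/-- The action of `Equiv.Perm I` on the (unrestricted) product group `I → G` by permuting
coordinates: `τ` acts by `h ↦ h ∘ τ⁻¹`. -/
def permuteCoords (I G : Type*) [Group G] : Equiv.Perm I →* MulAut (I → G) where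
  toFun τ :=
    { toFun := fun h => h ∘ ⇑τ⁻¹
      invFun := fun h => h ∘ ⇑τ
      left_inv := fun h => funext fun i => by simp
      right_inv := fun h => funext fun i => by simp
      map_mul' := fun h₁ h₂ => rfl }
  map_one' := rfl
  map_mul' := fun τ₁ τ₂ => rfl

section Aux

variable {N N' H : Type*} [Group N] [Group N'] [Group H]
  (φ : H →* MulAut N) (φ' : H →* MulAut N')

/-- Congruence of semidirect products along a compatible isomorphism of the normal parts. -/
def sdpCongr (e : N ≃* N') (he : ∀ (h : H) (n : N), e (φ h n) = φ' h (e n)) :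
    SemidirectProduct N H φ ≃* SemidirectProduct N' H φ' where
  toFun x := ⟨e x.left, x.right⟩
  invFun x := ⟨e.symm x.left, x.right⟩
  left_inv x := by cases x with | mk n h => simp
  right_inv x := by cases x with | mk n h => simp
  map_mul' x y := by
    cases x with | mk n h =>
    cases y with | mk m g =>
    refine SemidirectProduct.ext ?_ rfl
    show e (n * φ h m) = e n * φ' h (e m)
    rw [map_mul, he]

end Aux

section Main

variable (p : ℕ) [Fact p.Prime] {I : Type*}

/-- The permutation of `I × {a // a ≠ 0}` associated to `(n, τ)`. -/
def wrPerm (n : I → (ZMod p)ˣ) (τ : Equiv.Perm I) :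
    Equiv.Perm (I × {a : ZMod p // a ≠ 0}) where
  toFun x := (τ x.1, ⟨(n (τ x.1) : ZMod p) * (x.2 : ZMod p),
    mul_ne_zero (n (τ x.1)).ne_zero x.2.2⟩)
  invFun x := (τ.symm x.1, ⟨(((n x.1)⁻¹ : (ZMod p)ˣ) : ZMod p) * (x.2 : ZMod p),
    mul_ne_zero ((n x.1)⁻¹).ne_zero x.2.2⟩)
  left_inv x := by
    refine Prod.ext (τ.symm_apply_apply x.1) (Subtype.ext ?_)
    show ((n (τ x.1))⁻¹ : (ZMod p)ˣ) * ((n (τ x.1) : ZMod p) * (x.2 : ZMod p)) = _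
    rw [← mul_assoc, ← Units.val_mul, inv_mul_cancel, Units.val_one, one_mul]
  right_inv x := by
    refine Prod.ext (τ.apply_symm_apply x.1) (Subtype.ext ?_)
    show (n (τ (τ.symm x.1)) : ZMod p) * ((((n x.1)⁻¹ : (ZMod p)ˣ) : ZMod p) * (x.2 : ZMod p))
      = (x.2 : ZMod p)
    rw [τ.apply_symm_apply, ← mul_assoc, ← Units.val_mul, mul_inv_cancel, Units.val_one,
      one_mul]

@[simp] lemma wrPerm_apply (n : I → (ZMod p)ˣ) (τ : Equiv.Perm I)
    (x : I × {a : ZMod p // a ≠ 0}) :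
    wrPerm p n τ x = (τ x.1, ⟨(n (τ x.1) : ZMod p) * (x.2 : ZMod p),
      mul_ne_zero (n (τ x.1)).ne_zero x.2.2⟩) := rfl

/-- `wrPerm` as a monoid hom from the semidirect product of units. -/
def wrHom : SemidirectProduct (I → (ZMod p)ˣ) (Equiv.Perm I)
    (permuteCoords I (ZMod p)ˣ) →*
    Equiv.Perm (I × {a : ZMod p // a ≠ 0}) where
  toFun x := wrPerm p x.left x.right
  map_one' := by
    refine Equiv.ext fun x => Prod.ext rfl (Subtype.ext ?_)
    show ((1 : (ZMod p)ˣ) : ZMod p) * (x.2 : ZMod p) = (x.2 : ZMod p)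
    rw [Units.val_one, one_mul]
  map_mul' x y := by
    refine Equiv.ext fun z => Prod.ext rfl (Subtype.ext ?_)
    show ((x.left * (permuteCoords I (ZMod p)ˣ) x.right y.left)
        (x.right (y.right z.1)) : ZMod p) * (z.2 : ZMod p)
      = (x.left (x.right (y.right z.1)) : ZMod p) *
        ((y.left (y.right z.1) : ZMod p) * (z.2 : ZMod p))
    simp only [Pi.mul_apply, Units.val_mul, permuteCoords, MonoidHom.coe_mk, OneHom.coe_mk,
      MulEquiv.coe_mk, Equiv.coe_fn_mk, Function.comp_apply, Equiv.Perm.inv_def, Equiv.symm_apply_apply,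
      mul_assoc]

end Main

theorem stmt_13 (p : ℕ) [Fact p.Prime] (hodd : Odd p) {I : Type*}
    (Λ : (ZMod p)ˣ →* Equiv.Perm (I × {a : ZMod p // a ≠ 0}))
    (hΛ : ∀ (u : (ZMod p)ˣ) (x : I × {a : ZMod p // a ≠ 0}),
      (Λ u x).1 = x.1 ∧ ((Λ u x).2 : ZMod p) = (u : ZMod p) * (x.2 : ZMod p)) :
    Nonempty
      (↥(Subgroup.centralizer
          (Λ.range : Set (Equiv.Perm (I × {a : ZMod p // a ≠ 0})))) ≃*
        SemidirectProduct (I → Multiplicative (ZMod (p - 1))) (Equiv.Perm I)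
          (permuteCoords I (Multiplicative (ZMod (p - 1))))) := by
  classical
  set C := Subgroup.centralizer
      (Λ.range : Set (Equiv.Perm (I × {a : ZMod p // a ≠ 0}))) with hC
  have hΛapp : ∀ (u : (ZMod p)ˣ) (x : I × {a : ZMod p // a ≠ 0}),
      Λ u x = (x.1, ⟨(u : ZMod p) * (x.2 : ZMod p), mul_ne_zero u.ne_zero x.2.2⟩) := by
    intro u x
    obtain ⟨h1, h2⟩ := hΛ u x
    exact Prod.ext h1 (Subtype.ext h2)
  have hrange : ∀ y, wrHom p (I := I) y ∈ C := by
    rintro ⟨n, τ⟩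
    rw [hC, Subgroup.mem_centralizer_iff]
    rintro g ⟨u, rfl⟩
    refine Equiv.ext fun z => ?_
    show Λ u (wrPerm p n τ z) = wrPerm p n τ (Λ u z)
    rw [hΛapp u z, hΛapp u (wrPerm p n τ z)]
    refine Prod.ext rfl (Subtype.ext ?_)
    show (u : ZMod p) * ((n (τ z.1) : ZMod p) * (z.2 : ZMod p))
      = (n (τ z.1) : ZMod p) * ((u : ZMod p) * (z.2 : ZMod p))
    ring
  let θ : SemidirectProduct (I → (ZMod p)ˣ) (Equiv.Perm I)
      (permuteCoords I (ZMod p)ˣ) →* C :=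
    (wrHom p (I := I)).codRestrict C hrange
  have one_ne : (1 : ZMod p) ≠ 0 := one_ne_zero
  have hinj : Function.Injective θ := by
    intro x y hxy
    have hperm : wrHom p (I := I) x = wrHom p (I := I) y := congrArg Subtype.val hxy
    obtain ⟨n, τ⟩ := x; obtain ⟨m, ρ⟩ := y
    have hτ : τ = ρ := by
      ext i
      have := congrArg Prod.fst (Equiv.ext_iff.mp hperm (i, ⟨1, one_ne⟩))
      simpa only [wrHom, MonoidHom.coe_mk, OneHom.coe_mk, wrPerm_apply] using this
    subst hτ
    have hn : n = m := by
      funext j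
      have := congrArg (fun y => ((y.2 : ZMod p)))
        (Equiv.ext_iff.mp hperm (τ.symm j, ⟨1, one_ne⟩))
      simp only [wrHom, MonoidHom.coe_mk, OneHom.coe_mk, wrPerm_apply,
        Equiv.apply_symm_apply, mul_one] at this
      exact Units.ext this
    subst hn; rfl
  have hsurj : Function.Surjective θ := by
    rintro ⟨σ, hσ⟩
    rw [hC, Subgroup.mem_centralizer_iff] at hσ
    have hcomm : ∀ (u : (ZMod p)ˣ) (x : I × {a : ZMod p // a ≠ 0}),
        Λ u (σ x) = σ (Λ u x) := by
      intro u x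
      have h := hσ (Λ u) ⟨u, rfl⟩
      exact Equiv.ext_iff.mp h x
    have key : ∀ (σ' : Equiv.Perm (I × {a : ZMod p // a ≠ 0})),
        (∀ (u : (ZMod p)ˣ) (x : I × {a : ZMod p // a ≠ 0}), Λ u (σ' x) = σ' (Λ u x)) →
        ∀ (i : I) (t : {a : ZMod p // a ≠ 0}),
          σ' (i, t) = ((σ' (i, ⟨1, one_ne⟩)).1,
            ⟨(t : ZMod p) * ((σ' (i, ⟨1, one_ne⟩)).2 : ZMod p),
              mul_ne_zero t.2 (σ' (i, ⟨1, one_ne⟩)).2.2⟩) := by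
      intro σ' hc i t
      set u : (ZMod p)ˣ := Units.mk0 (t : ZMod p) t.2 with hu
      have h1 : Λ u (i, ⟨1, one_ne⟩) = (i, t) := by
        rw [hΛapp]
        exact Prod.ext rfl (Subtype.ext (by simp [hu]))
      calc σ' (i, t) = Λ u (σ' (i, ⟨1, one_ne⟩)) := by rw [hc, h1]
        _ = _ := by
          rw [hΛapp]
          exact Prod.ext rfl (Subtype.ext (by simp [hu, mul_comm]))
    have hcomm' : ∀ (u : (ZMod p)ˣ) (x : I × {a : ZMod p // a ≠ 0}),
        Λ u (σ⁻¹ x) = σ⁻¹ (Λ u x) := by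
      intro u x
      have h : Commute (Λ u) σ := hσ (Λ u) ⟨u, rfl⟩
      exact Equiv.ext_iff.mp h.inv_right x
    let τ₀ : I → I := fun i => (σ (i, ⟨1, one_ne⟩)).1
    let τ₁ : I → I := fun i => (σ⁻¹ (i, ⟨1, one_ne⟩)).1
    have hli : Function.LeftInverse τ₁ τ₀ := by
      intro i
      have h2 := key σ⁻¹ hcomm' (τ₀ i) (σ (i, ⟨1, one_ne⟩)).2
      have h3 : σ⁻¹ ((τ₀ i), (σ (i, ⟨1, one_ne⟩)).2) = (i, ⟨1, one_ne⟩) := by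
        have h4 : ((τ₀ i), (σ (i, ⟨1, one_ne⟩)).2) = σ (i, ⟨1, one_ne⟩) := rfl
        rw [h4]; simp
      rw [h3] at h2
      exact (congrArg Prod.fst h2).symm
    have hri : Function.RightInverse τ₁ τ₀ := by
      intro i
      have h2 := key σ hcomm (τ₁ i) (σ⁻¹ (i, ⟨1, one_ne⟩)).2
      have h3 : σ ((τ₁ i), (σ⁻¹ (i, ⟨1, one_ne⟩)).2) = (i, ⟨1, one_ne⟩) := by
        have h4 : ((τ₁ i), (σ⁻¹ (i, ⟨1, one_ne⟩)).2) = σ⁻¹ (i, ⟨1, one_ne⟩) := rfl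
        rw [h4]; simp
      rw [h3] at h2
      exact (congrArg Prod.fst h2).symm
    let τ : Equiv.Perm I := ⟨τ₀, τ₁, hli, hri⟩
    let n : I → (ZMod p)ˣ := fun j =>
      Units.mk0 ((σ (τ.symm j, ⟨1, one_ne⟩)).2 : ZMod p) (σ (τ.symm j, ⟨1, one_ne⟩)).2.2
    refine ⟨⟨n, τ⟩, ?_⟩
    apply Subtype.ext
    show wrHom p (I := I) ⟨n, τ⟩ = σ
    refine Equiv.ext fun x => ?_
    have h1 := key σ hcomm x.1 x.2
    have hx : x = (x.1, x.2) := rfl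
    show wrPerm p n τ x = σ x
    rw [hx, h1, wrPerm_apply]
    refine Prod.ext rfl (Subtype.ext ?_)
    show (n (τ x.1) : ZMod p) * (x.2 : ZMod p)
      = (x.2 : ZMod p) * ((σ (x.1, ⟨1, one_ne⟩)).2 : ZMod p)
    have hτx : τ.symm (τ x.1) = x.1 := hli x.1
    show (Units.mk0 ((σ (τ.symm (τ x.1), ⟨1, one_ne⟩)).2 : ZMod p) _ : ZMod p) * _ = _
    rw [hτx, Units.val_mk0, mul_comm]
  let e₁ : (↥C) ≃* SemidirectProduct (I → (ZMod p)ˣ) (Equiv.Perm I)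
      (permuteCoords I (ZMod p)ˣ) := (MulEquiv.ofBijective θ ⟨hinj, hsurj⟩).symm
  have hcard : Nat.card (ZMod p)ˣ = p - 1 := by
    rw [Nat.card_eq_fintype_card, ZMod.card_units]
  let e₂ : (ZMod p)ˣ ≃* Multiplicative (ZMod (p - 1)) :=
    (hcard ▸ zmodCyclicMulEquiv (inferInstance : IsCyclic (ZMod p)ˣ)).symm
  let eN : (I → (ZMod p)ˣ) ≃* (I → Multiplicative (ZMod (p - 1))) :=
    MulEquiv.piCongrRight (fun _ => e₂)
  refine ⟨e₁.trans (sdpCongr _ _ eN ?_)⟩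
  intro h x
  rfl
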